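/- Let X_t be the 8-dimensional nilmanifold family with invariant complex structure given by the (1,0)-form basis η¹_t,...,η⁴_t with dη¹_t = dη²_t = 0, dη³_t = (1/(1-|t|²))(η¹²_t + t η^{2 1̄}_t - i t η^{2 2̄}_t), dη⁴_t = (1/(1-|t|²))(2t̄ η¹²_t + i η^{1 1̄}_t + η^{1 2̄}_t + η^{2 1̄}_t - i t η^{2 2̄}_t), where |t| < 1. At t = 0, every closed invariant (2,0)-form Ω satisfies Ω ∧ Ω = 0; for t ≠ 0, Ω = α η¹²_t + (i/t)θ η¹³_t + τ η²³_t + θ η²⁴_t with θ ≠ 0 is closed and satisfies Ω ∧ Ω ≠ 0. -/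

import Mathlib

/-
STATEMENT 12: For the 8-dimensional nilmanifold family with invariant complex structure
given by (1,0)-forms η¹_t,…,η⁴_t (|t| < 1) with
dη¹ = dη² = 0,
dη³ = (1/(1-|t|²)) (η¹² + t η²∧η̄¹ - i t η²∧η̄²),
dη⁴ = (1/(1-|t|²)) (2 t̄ η¹² + i η¹∧η̄¹ + η¹∧η̄² + η²∧η̄¹ - i t η²∧η̄²):
at t = 0 every closed invariant (2,0)-form Ω satisfies Ω∧Ω = 0; for t ≠ 0 the form
Ω = α η¹² + (i/t)θ η¹³ + τ η²³ + θ η²⁴ with θ ≠ 0 is closed and satisfies Ω∧Ω ≠ 0.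

Model: exterior algebra over ℂ on generators gen 0..3 = η¹..η⁴, gen 4..7 = η̄¹..η̄⁴;
d determined by the structure equations (and conjugates) and the Leibniz rule.
-/

noncomputable section

abbrev E := ExteriorAlgebra ℂ (Fin 8 → ℂ)

def gen (i : Fin 8) : E := ExteriorAlgebra.ι ℂ (Pi.single i 1)

def Kt (t : ℂ) : ℂ := (1 - (Complex.normSq t : ℂ))⁻¹

def dgen (t : ℂ) : Fin 8 → E :=
  ![0, 0,
    (Kt t) • (gen 0 * gen 1) + (Kt t * t) • (gen 1 * gen 4)
      - (Kt t * Complex.I * t) • (gen 1 * gen 5),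
    (2 * Kt t * (starRingEnd ℂ) t) • (gen 0 * gen 1) + (Kt t * Complex.I) • (gen 0 * gen 4)
      + (Kt t) • (gen 0 * gen 5) + (Kt t) • (gen 1 * gen 4)
      - (Kt t * Complex.I * t) • (gen 1 * gen 5),
    0, 0,
    (Kt t) • (gen 4 * gen 5) + (Kt t * (starRingEnd ℂ) t) • (gen 5 * gen 0)
      + (Kt t * Complex.I * (starRingEnd ℂ) t) • (gen 5 * gen 1),
    (2 * Kt t * t) • (gen 4 * gen 5) - (Kt t * Complex.I) • (gen 4 * gen 0)
      + (Kt t) • (gen 4 * gen 1) + (Kt t) • (gen 5 * gen 0)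
      + (Kt t * Complex.I * (starRingEnd ℂ) t) • (gen 5 * gen 1)]

def d2 (t : ℂ) (i j : Fin 8) : E := dgen t i * gen j - gen i * dgen t j

/-- generic invariant (2,0)-form Ω = α η¹² + β η¹³ + γ η¹⁴ + τ η²³ + θ η²⁴ + ζ η³⁴. -/
def Om (a b c d e f : ℂ) : E :=
  a • (gen 0 * gen 1) + b • (gen 0 * gen 2) + c • (gen 0 * gen 3) +
  d • (gen 1 * gen 2) + e • (gen 1 * gen 3) + f • (gen 2 * gen 3)

def dOm (t a b c d e f : ℂ) : E :=
  a • d2 t 0 1 + b • d2 t 0 2 + c • d2 t 0 3 +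
  d • d2 t 1 2 + e • d2 t 1 3 + f • d2 t 2 3

/-! ### Auxiliary lemmas -/

lemma gen_anti (i j : Fin 8) : gen i * gen j = -(gen j * gen i) := by
  have := ExteriorAlgebra.ι_add_mul_swap (R := ℂ) (Pi.single i 1 : Fin 8 → ℂ) (Pi.single j 1)
  unfold gen
  linear_combination (norm := module) this

lemma gen_anti' (i j : Fin 8) (x : E) : gen i * (gen j * x) = -(gen j * (gen i * x)) := by
  rw [← mul_assoc, gen_anti, neg_mul, mul_assoc]

lemma gen_sq (i : Fin 8) : gen i * gen i = 0 := ExteriorAlgebra.ι_sq_zero _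

lemma gen_sq' (i : Fin 8) (x : E) : gen i * (gen i * x) = 0 := by
  rw [← mul_assoc, gen_sq, zero_mul]

lemma swA10 (x:E) : gen 1 * (gen 0 * x) = -(gen 0 * (gen 1 * x)) := gen_anti' _ _ _
lemma swA20 (x:E) : gen 2 * (gen 0 * x) = -(gen 0 * (gen 2 * x)) := gen_anti' _ _ _
lemma swA21 (x:E) : gen 2 * (gen 1 * x) = -(gen 1 * (gen 2 * x)) := gen_anti' _ _ _
lemma swA30 (x:E) : gen 3 * (gen 0 * x) = -(gen 0 * (gen 3 * x)) := gen_anti' _ _ _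
lemma swA31 (x:E) : gen 3 * (gen 1 * x) = -(gen 1 * (gen 3 * x)) := gen_anti' _ _ _
lemma swA32 (x:E) : gen 3 * (gen 2 * x) = -(gen 2 * (gen 3 * x)) := gen_anti' _ _ _
lemma swB10 : gen 1 * gen 0 = -(gen 0 * gen 1) := gen_anti _ _
lemma swB20 : gen 2 * gen 0 = -(gen 0 * gen 2) := gen_anti _ _
lemma swB21 : gen 2 * gen 1 = -(gen 1 * gen 2) := gen_anti _ _
lemma swB30 : gen 3 * gen 0 = -(gen 0 * gen 3) := gen_anti _ _
lemma swB31 : gen 3 * gen 1 = -(gen 1 * gen 3) := gen_anti _ _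
lemma swB32 : gen 3 * gen 2 = -(gen 2 * gen 3) := gen_anti _ _

lemma dgen_0 (t : ℂ) : dgen t 0 = 0 := rfl
lemma dgen_1 (t : ℂ) : dgen t 1 = 0 := rfl
lemma dgen_2 (t : ℂ) : dgen t 2 =
    (Kt t) • (gen 0 * gen 1) + (Kt t * t) • (gen 1 * gen 4)
      - (Kt t * Complex.I * t) • (gen 1 * gen 5) := rfl
lemma dgen_3 (t : ℂ) : dgen t 3 =
    (2 * Kt t * (starRingEnd ℂ) t) • (gen 0 * gen 1) + (Kt t * Complex.I) • (gen 0 * gen 4)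
      + (Kt t) • (gen 0 * gen 5) + (Kt t) • (gen 1 * gen 4)
      - (Kt t * Complex.I * t) • (gen 1 * gen 5) := rfl

lemma Kt0 : Kt 0 = 1 := by simp [Kt]

/-- coordinate alternating map: minor determinant on the coordinates `idx`. -/
def coordAlt (k : ℕ) (idx : Fin k → Fin 8) : (Fin 8 → ℂ) [⋀^Fin k]→ₗ[ℂ] ℂ :=
  (Matrix.detRowAlternating (n := Fin k) (R := ℂ)).compLinearMap (LinearMap.funLeft ℂ ℂ idx)

def famF (k : ℕ) (idx : Fin k → Fin 8) : ∀ i, (Fin 8 → ℂ) [⋀^Fin i]→ₗ[ℂ] ℂ := fun i =>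
  if h : i = k then h ▸ coordAlt k idx else 0

/-- the linear functional on the exterior algebra extracting the `idx` coefficient. -/
def φ (k : ℕ) (idx : Fin k → Fin 8) : E →ₗ[ℂ] ℂ := ExteriorAlgebra.liftAlternating (famF k idx)

lemma φ3_eval (idx : Fin 3 → Fin 8) (a b c : Fin 8) :
    φ 3 idx (gen a * (gen b * gen c)) =
      Matrix.det (Matrix.of (fun r s => (Pi.single (![a,b,c] r) 1 : Fin 8 → ℂ) (idx s))) := by
  have h : gen a * (gen b * gen c) =
      ExteriorAlgebra.ιMulti ℂ 3 ![Pi.single a 1, Pi.single b 1, Pi.single c 1] := by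
    rw [ExteriorAlgebra.ιMulti_apply]
    simp [List.ofFn_succ, gen]
  rw [h, φ, ExteriorAlgebra.liftAlternating_apply_ιMulti]
  simp [famF, coordAlt, Matrix.detRowAlternating]
  congr 1
  ext r s
  fin_cases r <;> simp [Matrix.vecHead, Matrix.vecTail]

lemma φ4_eval (idx : Fin 4 → Fin 8) (a b c d : Fin 8) :
    φ 4 idx (gen a * (gen b * (gen c * gen d))) =
      Matrix.det (Matrix.of (fun r s => (Pi.single (![a,b,c,d] r) 1 : Fin 8 → ℂ) (idx s))) := by
  have h : gen a * (gen b * (gen c * gen d)) =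
      ExteriorAlgebra.ιMulti ℂ 4 ![Pi.single a 1, Pi.single b 1, Pi.single c 1, Pi.single d 1] := by
    rw [ExteriorAlgebra.ιMulti_apply]
    simp [List.ofFn_succ, gen]
  rw [h, φ, ExteriorAlgebra.liftAlternating_apply_ιMulti]
  simp [famF, coordAlt, Matrix.detRowAlternating]
  congr 1
  ext r s
  fin_cases r <;> simp [Matrix.vecHead, Matrix.vecTail]

lemma dOm0 (α β γ τ θ ζ : ℂ) : dOm 0 α β γ τ θ ζ =
    (Complex.I*θ - γ) • (gen 0*(gen 1*gen 4)) + θ • (gen 0*(gen 1*gen 5))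
    + ζ • (gen 0*(gen 1*gen 3)) + (Complex.I*ζ) • (gen 0*(gen 2*gen 4))
    + ζ • (gen 0*(gen 2*gen 5)) + ζ • (gen 1*(gen 2*gen 4)) := by
  simp only [dOm, d2, dgen_0, dgen_1, dgen_2, dgen_3, Kt0, map_zero, Complex.ofReal_zero,
    mul_zero, zero_mul, zero_smul, smul_zero, zero_sub, sub_zero, zero_add, add_zero,
    mul_add, mul_sub, add_mul, sub_mul, mul_smul_comm, smul_mul_assoc, mul_assoc,
    smul_smul, smul_add, smul_sub, smul_neg, mul_neg, neg_neg, neg_zero, one_mul, mul_one,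
    gen_sq, gen_sq', swA10, swA20, swA21, swA30, swA31, swA32,
    swB10, swB20, swB21, swB30, swB31, swB32]
  match_scalars <;> ring

lemma Om_sq (α β τ θ : ℂ) :
    Om α β 0 τ θ 0 * Om α β 0 τ θ 0 = (-(2*β*θ)) • (gen 0 * (gen 1 * (gen 2 * gen 3))) := by
  simp only [Om, zero_smul, add_zero, mul_add, add_mul, mul_smul_comm, smul_mul_assoc,
    mul_assoc, smul_smul, smul_add, smul_neg, mul_neg, neg_neg,
    gen_sq, gen_sq', swA10, swA20, swA21, swA30, swA31, swA32, swB10, swB20, swB21,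
    swB30, swB31, swB32, smul_zero, mul_zero, zero_mul, zero_add, neg_zero]
  try module

set_option maxHeartbeats 2000000 in
theorem stmt12 (t : ℂ) (ht : ‖t‖ < 1) :
    (t = 0 → ∀ α β γ τ θ ζ : ℂ, dOm t α β γ τ θ ζ = 0 →
        Om α β γ τ θ ζ * Om α β γ τ θ ζ = 0) ∧
    (t ≠ 0 → ∀ α τ θ : ℂ, θ ≠ 0 →
        dOm t α (Complex.I / t * θ) 0 τ θ 0 = 0 ∧
        Om α (Complex.I / t * θ) 0 τ θ 0 * Om α (Complex.I / t * θ) 0 τ θ 0 ≠ 0) := by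
  constructor
  · rintro rfl α β γ τ θ ζ h
    rw [dOm0] at h
    have hθ := congrArg (φ 3 ![0,1,5]) h
    have hζ := congrArg (φ 3 ![0,1,3]) h
    have hγ := congrArg (φ 3 ![0,1,4]) h
    simp only [map_add, map_smul, map_neg, map_zero, φ3_eval, smul_eq_mul] at hθ hζ hγ
    simp (config := { decide := true }) [Matrix.det_fin_three, Pi.single_apply] at hθ hζ hγ
    rw [hθ] at hγ
    simp only [mul_zero, zero_sub, neg_eq_zero] at hγ
    subst hθ hζ hγ
    have : Om α β 0 τ 0 0 * Om α β 0 τ 0 0 = (-(2*β*0)) • (gen 0 * (gen 1 * (gen 2 * gen 3))) :=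
      Om_sq α β τ 0
    simpa using this
  · intro ht0 α τ θ hθ
    constructor
    · simp only [dOm, d2, dgen_0, dgen_1, dgen_2, dgen_3, zero_mul, mul_zero, zero_smul,
        smul_zero, zero_sub, sub_zero, zero_add, add_zero, mul_add, mul_sub, add_mul, sub_mul,
        mul_smul_comm, smul_mul_assoc, mul_assoc, smul_smul, smul_add, smul_sub, smul_neg,
        gen_sq, gen_sq', swA10, swA20, swA21, swA30, swA31, swA32,
        swB10, swB20, swB21, swB30, swB31, swB32, mul_neg, neg_neg, neg_zero]
      match_scalars
      all_goals field_simp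
      all_goals try ring_nf
      all_goals simp [Complex.I_sq]
      
    · intro hc
      rw [Om_sq] at hc
      have h4 := congrArg (φ 4 ![0,1,2,3]) hc
      rw [map_smul, map_zero, φ4_eval] at h4
      have hid : (Matrix.of fun r s =>
          (Pi.single (![(0:Fin 8),1,2,3] r) 1 : Fin 8 → ℂ) (![(0:Fin 8),1,2,3] s)) =
          (1 : Matrix (Fin 4) (Fin 4) ℂ) := by
        ext r s
        fin_cases r <;> fin_cases s <;> simp [Matrix.one_apply, Pi.single_apply]
      rw [hid, Matrix.det_one, smul_eq_mul, mul_one, neg_eq_zero] at h4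
      field_simp at h4
      simp [hθ, Complex.I_ne_zero] at h4

end
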